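/- Assume r ≠ 0 and the exponential survival function Φ̄(t) = e^{−κ t} with κ > 0. Let V : ℝ³ → ℝ solve the EXPn–HJB equation. Then for every s ∈ ℝ the function W(l,h,t) := V(l − κ s/(a r²), h, t + s/r) also solves the EXPn–HJB equation. (This is the symmetry generated by the generator U₃, which for the exponential distribution reads −(κ/(a r²)) ∂/∂l + (1/r) ∂/∂t.) -/

import Mathlib

/-- Partial derivative of `V(l,h,t)` in `l`. -/
noncomputable def pdl (V : ℝ → ℝ → ℝ → ℝ) (l h t : ℝ) : ℝ := deriv (fun x => V x h t) l
/-- Partial derivative of `V(l,h,t)` in `h`. -/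
noncomputable def pdh (V : ℝ → ℝ → ℝ → ℝ) (l h t : ℝ) : ℝ := deriv (fun y => V l y t) h
/-- Partial derivative of `V(l,h,t)` in `t`. -/
noncomputable def pdt (V : ℝ → ℝ → ℝ → ℝ) (l h t : ℝ) : ℝ := deriv (fun s => V l h s) t
/-- Second partial derivative `V_{ll}`. -/
noncomputable def pdll (V : ℝ → ℝ → ℝ → ℝ) (l h t : ℝ) : ℝ := deriv (fun x => pdl V x h t) l
/-- Second partial derivative `V_{hh}`. -/
noncomputable def pdhh (V : ℝ → ℝ → ℝ → ℝ) (l h t : ℝ) : ℝ := deriv (fun y => pdh V l y t) h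
/-- Mixed partial derivative `V_{lh}`. -/
noncomputable def pdlh (V : ℝ → ℝ → ℝ → ℝ) (l h t : ℝ) : ℝ := deriv (fun y => pdl V l y t) h

/-- `V(l,h,t)` is a (C², `V_l > 0`, `V_{ll} < 0`) solution of the EXPn–HJB equation
with survival function `Φ`. -/
def SolvesEXPn (r σ η a α μ δ ρ : ℝ) (Φ : ℝ → ℝ) (V : ℝ → ℝ → ℝ → ℝ) : Prop :=
  ContDiff ℝ 2 (fun p : ℝ × ℝ × ℝ => V p.1 p.2.1 p.2.2) ∧
  (∀ l h t : ℝ, 0 < pdl V l h t) ∧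
  (∀ l h t : ℝ, pdll V l h t < 0) ∧
  (∀ l h t : ℝ,
    pdt V l h t + (1/2) * η^2 * h^2 * pdhh V l h t + (r * l + δ * h) * pdl V l h t
      + (μ - δ) * h * pdh V l h t
      - ((α - r)^2 * (pdl V l h t)^2
          + 2 * (α - r) * η * ρ * h * pdl V l h t * pdlh V l h t
          + η^2 * ρ^2 * σ^2 * h^2 * (pdlh V l h t)^2) / (2 * σ^2 * pdll V l h t)
      + (1/a) * pdl V l h t * Real.log (pdl V l h t)
      - (1/a) * (1 + Real.log (Φ t)) * pdl V l h t
      - (Real.log a / a) * pdl V l h t = 0)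

section ShiftLemmas

variable (V : ℝ → ℝ → ℝ → ℝ) (c d l h t : ℝ)

lemma pdl_shift : pdl (fun l h t => V (l - c) h (t + d)) l h t = pdl V (l - c) h (t + d) :=
  deriv_comp_sub_const (fun x => V x h (t + d)) c l

lemma pdh_shift : pdh (fun l h t => V (l - c) h (t + d)) l h t = pdh V (l - c) h (t + d) := rfl

lemma pdt_shift : pdt (fun l h t => V (l - c) h (t + d)) l h t = pdt V (l - c) h (t + d) :=
  deriv_comp_add_const (fun u => V (l - c) h u) d t

lemma pdll_shift : pdll (fun l h t => V (l - c) h (t + d)) l h t = pdll V (l - c) h (t + d) := by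
  unfold pdll
  have : (fun x => pdl (fun l h t => V (l - c) h (t + d)) x h t)
      = fun x => pdl V (x - c) h (t + d) := funext fun x => pdl_shift V c d x h t
  rw [this]
  exact deriv_comp_sub_const (fun x => pdl V x h (t + d)) c l

lemma pdlh_shift : pdlh (fun l h t => V (l - c) h (t + d)) l h t = pdlh V (l - c) h (t + d) := by
  unfold pdlh
  have : (fun y => pdl (fun l h t => V (l - c) h (t + d)) l y t)
      = fun y => pdl V (l - c) y (t + d) := funext fun y => pdl_shift V c d l y t
  rw [this]

lemma pdhh_shift : pdhh (fun l h t => V (l - c) h (t + d)) l h t = pdhh V (l - c) h (t + d) := rfl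

end ShiftLemmas

/-- For the exponential survival function `Φ̄(t) = e^{−κt}` with
`κ > 0` and `r ≠ 0`: if `V` solves the EXPn–HJB equation then for every `s ∈ ℝ`
the function `W(l,h,t) = V(l − κ s/(a r²), h, t + s/r)` also solves it
(symmetry generated by `U₃ = −(κ/(a r²)) ∂/∂l + (1/r) ∂/∂t`). -/
theorem stmt_10 (r σ η a α μ δ ρ κ : ℝ) (hσ : 0 < σ) (ha : 0 < a) (hr : r ≠ 0)
    (hκ : 0 < κ)
    (V : ℝ → ℝ → ℝ → ℝ)
    (hV : SolvesEXPn r σ η a α μ δ ρ (fun t => Real.exp (-(κ * t))) V) (s : ℝ) :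
    SolvesEXPn r σ η a α μ δ ρ (fun t => Real.exp (-(κ * t)))
      (fun l h t => V (l - κ * s / (a * r^2)) h (t + s / r)) := by
  obtain ⟨hC, hpos, hneg, heq⟩ := hV
  set c : ℝ := κ * s / (a * r^2) with hc
  set d : ℝ := s / r with hd
  refine ⟨?_, ?_, ?_, ?_⟩
  · have hg : ContDiff ℝ 2 (fun p : ℝ × ℝ × ℝ => (p.1 - c, p.2.1, p.2.2 + d)) :=
      (contDiff_fst.sub contDiff_const).prodMk
        ((contDiff_fst.comp contDiff_snd).prodMk
          ((contDiff_snd.comp contDiff_snd).add contDiff_const))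
    exact hC.comp hg
  · intro l h t
    rw [pdl_shift]
    exact hpos _ _ _
  · intro l h t
    rw [pdll_shift]
    exact hneg _ _ _
  · intro l h t
    rw [pdl_shift, pdh_shift, pdt_shift, pdll_shift, pdlh_shift, pdhh_shift]
    have key := heq (l - c) h (t + d)
    simp only [Real.log_exp] at key ⊢
    have h1 : r * c = κ * d / a := by
      rw [hc, hd]; field_simp
    linear_combination key + pdl V (l - c) h (t + d) * h1
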